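/- For all real x > 0 with x ≠ 1, 1/ln(x) + 1/(1-x) = ∑_{k=1}^∞ 1/(2^k·(1 + x^(2^(-k)))). -/

import Mathlib

open Real Filter Finset Topology

theorem ramanujan_log_formula (x : ℝ) (hx : 0 < x) (hx1 : x ≠ 1) :
    1 / Real.log x + 1 / (1 - x) =
      ∑' k : ℕ, 1 / ((2 : ℝ) ^ (k + 1) * (1 + x ^ ((2 : ℝ) ^ (-((k : ℝ) + 1))))) := by
  have hlog : Real.log x ≠ 0 := by
    intro h
    rcases Real.log_eq_zero.mp h with h | h | h
    · exact hx.ne' h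
    · exact hx1 h
    · rw [h] at hx; linarith
  have hx1' : x - 1 ≠ 0 := sub_ne_zero.mpr hx1
  set f : ℕ → ℝ := fun n => 1 / ((2 : ℝ) ^ n * (x ^ ((2:ℝ) ^ (-(n:ℝ))) - 1)) with hf
  set g : ℕ → ℝ := fun k =>
    1 / ((2 : ℝ) ^ (k + 1) * (1 + x ^ ((2 : ℝ) ^ (-((k : ℝ) + 1))))) with hg
  have hy : ∀ t : ℝ, 0 < x ^ t := fun t => Real.rpow_pos_of_pos hx _
  have hy1 : ∀ t : ℝ, t ≠ 0 → x ^ t ≠ 1 := by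
    intro t ht h
    apply hx1
    have := Real.rpow_rpow_inv hx.le ht
    rw [h, Real.one_rpow] at this
    exact this.symm
  -- telescoping identity
  have hterm : ∀ k : ℕ, g k = f (k + 1) - f k := by
    intro k
    set a : ℝ := (2:ℝ) ^ (-((k:ℝ) + 1)) with ha
    set y : ℝ := x ^ a with hyy
    have ha0 : a ≠ 0 := (Real.rpow_pos_of_pos two_pos _).ne'
    have hy0 : 0 < y := hy a
    have hyne : y ≠ 1 := hy1 a ha0
    have h2 : (2:ℝ) ^ (-(k:ℝ)) = a + a := by
      have he : (-(k:ℝ)) = 1 + (-((k:ℝ)+1)) := by ring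
      rw [he, Real.rpow_add two_pos, Real.rpow_one, ha]; ring
    have hyx : x ^ ((2:ℝ) ^ (-(k:ℝ))) = y * y := by
      rw [h2, Real.rpow_add hx, hyy]
    have hcast : -((k+1 : ℕ) : ℝ) = -((k:ℝ) + 1) := by push_cast; ring
    have hfk1 : f (k+1) = 1 / ((2:ℝ) ^ (k+1) * (y - 1)) := by
      rw [hf]; simp only [hcast]; rfl
    have hfk : f k = 1 / ((2:ℝ) ^ k * (y * y - 1)) := by
      rw [hf]; simp only [hyx]
    have hgk : g k = 1 / ((2:ℝ) ^ (k + 1) * (1 + y)) := rfl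
    rw [hfk1, hfk, hgk]
    have h2k : ((2:ℝ) ^ k) ≠ 0 := by positivity
    have hm1 : y - 1 ≠ 0 := sub_ne_zero.mpr hyne
    have hp1 : 1 + y ≠ 0 := by positivity
    have hq : y * y - 1 ≠ 0 := by
      have : y * y - 1 = (y - 1) * (y + 1) := by ring
      rw [this]
      exact mul_ne_zero hm1 (by positivity)
    rw [show y * y - 1 = (y - 1) * (1 + y) by ring]
    field_simp
    ring
  -- partial sums telescope
  have hpart : ∀ n : ℕ, ∑ i ∈ Finset.range n, g i = f n - f 0 := by
    intro n
    simp only [hterm]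
    exact Finset.sum_range_sub f n
  -- limit of f
  have hd : HasDerivAt (fun t : ℝ => x ^ t) (Real.log x) 0 := by
    simpa using (Real.hasStrictDerivAt_const_rpow hx 0).hasDerivAt
  have hslope := hasDerivAt_iff_tendsto_slope.mp hd
  have htn : Tendsto (fun n : ℕ => (2:ℝ) ^ (-(n:ℝ))) atTop (𝓝[≠] (0:ℝ)) := by
    apply tendsto_nhdsWithin_of_tendsto_nhds_of_eventually_within
    · have heq : ∀ n : ℕ, (2:ℝ) ^ (-(n:ℝ)) = (1/2 : ℝ) ^ n := by
        intro n
        rw [Real.rpow_neg two_pos.le, Real.rpow_natCast, one_div, inv_pow]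
      simp only [heq]
      exact tendsto_pow_atTop_nhds_zero_of_lt_one (by norm_num) (by norm_num)
    · filter_upwards with n
      exact Set.mem_compl_singleton_iff.mpr (Real.rpow_pos_of_pos two_pos _).ne'
  have h1 : Tendsto (fun n : ℕ => slope (fun t : ℝ => x ^ t) 0 ((2:ℝ) ^ (-(n:ℝ))))
      atTop (𝓝 (Real.log x)) := hslope.comp htn
  have hfs : ∀ n : ℕ, f n = (slope (fun t : ℝ => x ^ t) 0 ((2:ℝ) ^ (-(n:ℝ))))⁻¹ := by
    intro n
    have ht0 : ((2:ℝ) ^ (-(n:ℝ))) ≠ 0 := (Real.rpow_pos_of_pos two_pos _).ne'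
    have hinv : ((2:ℝ) ^ (-(n:ℝ)))⁻¹ = (2:ℝ) ^ (n:ℕ) := by
      rw [Real.rpow_neg two_pos.le, inv_inv, Real.rpow_natCast]
    rw [slope_def_field, hf]
    simp only [Real.rpow_zero, sub_zero]
    rw [div_eq_mul_inv, ← hinv]
    field_simp
  have hflim : Tendsto f atTop (𝓝 (Real.log x)⁻¹) := by
    exact (h1.inv₀ hlog).congr fun n => (hfs n).symm
  have hf0 : f 0 = 1 / (x - 1) := by
    rw [hf]
    norm_num
  -- sum
  have hgnn : ∀ k, 0 ≤ g k := by
    intro k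
    rw [hg]
    have := (hy ((2 : ℝ) ^ (-((k : ℝ) + 1)))).le
    positivity
  have hsum : HasSum g ((Real.log x)⁻¹ - f 0) := by
    rw [hasSum_iff_tendsto_nat_of_nonneg hgnn]
    simp only [hpart]
    exact hflim.sub tendsto_const_nhds
  rw [hsum.tsum_eq, hf0]
  have h1x : (1:ℝ) - x ≠ 0 := by intro h; apply hx1; linarith
  field_simp
  ring
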